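/- Let m > 1 be an integer and n = 2^m - 1, and let {C_h}_{h=0}^{n} denote the weight distribution of the binary Hamming code H(m,2). Then C_0 = 1, C_1 = 0, and for every i ≥ 1, (i+1) C_{i+1} + C_i + (n - i + 1) C_{i-1} = binom(n, i). -/

import Mathlib

open Finset

/-- The weight distribution of the binary linear code with parity-check matrix `H`:
`binaryWeightCount H h` is the number of codewords of Hamming weight `h`. -/
noncomputable def binaryWeightCount {m n : ℕ} (H : Matrix (Fin m) (Fin n) (ZMod 2))
    (h : ℕ) : ℕ :=
  Nat.card {c : Fin n → ZMod 2 // H.mulVec c = 0 ∧ hammingNorm c = h}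

namespace BHWaux

variable {m n : ℕ}

/-- column `j` of `H` -/
def col (H : Matrix (Fin m) (Fin n) (ZMod 2)) (j : Fin n) : Fin m → ZMod 2 := fun i => H i j

lemma zmod2_add_eq_zero {a b : ZMod 2} (h : a + b = 0) : a = b := by revert a b; decide

lemma supp_card (c : Fin n → ZMod 2) :
    hammingNorm c = (Finset.univ.filter fun k => c k ≠ 0).card := rfl

lemma mulVec_eq_sum (H : Matrix (Fin m) (Fin n) (ZMod 2)) (c : Fin n → ZMod 2) :
    H.mulVec c = ∑ j ∈ Finset.univ.filter (fun j => c j ≠ 0), col H j := by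
  funext i
  rw [Finset.sum_apply]
  show ∑ j, H i j * c j = _
  rw [← Finset.sum_filter_of_ne (p := fun j => c j ≠ 0)
    (fun j _ h hc => h (by rw [hc, mul_zero]))]
  refine Finset.sum_congr rfl fun j hj => ?_
  have hcj : c j = 1 := by
    have := (Finset.mem_filter.1 hj).2
    revert this; generalize c j = a; revert a; decide
  rw [hcj, mul_one]; rfl

lemma min_weight (H : Matrix (Fin m) (Fin n) (ZMod 2))
    (hnz : ∀ j : Fin n, (fun i => H i j) ≠ 0)
    (hinj : ∀ j k : Fin n, j ≠ k → (fun i => H i j) ≠ fun i => H i k)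
    (c : Fin n → ZMod 2) (hc : H.mulVec c = 0) (hc0 : c ≠ 0) : 3 ≤ hammingNorm c := by
  by_contra hlt
  push_neg at hlt
  rw [supp_card] at hlt
  set s := Finset.univ.filter fun k => c k ≠ 0 with hs
  have hcard : s.card ≤ 2 := by omega
  have hne : s.Nonempty := by
    rcases Function.ne_iff.1 hc0 with ⟨j, hj⟩
    exact ⟨j, Finset.mem_filter.2 ⟨Finset.mem_univ _, hj⟩⟩
  have hsum : ∑ j ∈ s, col H j = 0 := by rw [← mulVec_eq_sum, hc]
  interval_cases h : s.card
  · exact absurd (Finset.card_eq_zero.1 h ▸ hne) (by simp)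
  · obtain ⟨j, hj⟩ := Finset.card_eq_one.1 h
    rw [hj, Finset.sum_singleton] at hsum
    exact hnz j hsum
  · obtain ⟨j, k, hjk, hjks⟩ := Finset.card_eq_two.1 h
    rw [hjks, Finset.sum_pair hjk] at hsum
    exact hinj j k hjk (funext fun i => zmod2_add_eq_zero (congrFun hsum i))

lemma col_surj (H : Matrix (Fin m) (Fin n) (ZMod 2)) (hm : 1 < m) (hn : n = 2 ^ m - 1)
    (hnz : ∀ j : Fin n, (fun i => H i j) ≠ 0)
    (hinj : ∀ j k : Fin n, j ≠ k → (fun i => H i j) ≠ fun i => H i k) :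
    ∀ s : Fin m → ZMod 2, s ≠ 0 → ∃ j, col H j = s := by
  intro s hs
  set f : Fin n → {s : Fin m → ZMod 2 // s ≠ 0} := fun j => ⟨col H j, hnz j⟩ with hf
  have hfinj : Function.Injective f := by
    intro j k h
    by_contra hne
    exact hinj j k hne (congrArg Subtype.val h)
  have hcard : Fintype.card (Fin n) = Fintype.card {s : Fin m → ZMod 2 // s ≠ 0} := by
    rw [Fintype.card_fin, Fintype.card_subtype_compl, Fintype.card_subtype_eq,
      Fintype.card_fun, ZMod.card, Fintype.card_fin, hn]
  have hbij := (Fintype.bijective_iff_injective_and_card f).2 ⟨hfinj, hcard⟩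
  obtain ⟨j, hj⟩ := hbij.2 ⟨s, hs⟩
  exact ⟨j, congrArg Subtype.val hj⟩

lemma flip_apply_ne (c : Fin n → ZMod 2) (j k : Fin n) (h : k ≠ j) :
    (c + Pi.single j 1 : Fin n → ZMod 2) k = c k := by
  simp [Pi.single_eq_of_ne h]

lemma flip_supp_mem (c : Fin n → ZMod 2) (j : Fin n) (h : c j ≠ 0) :
    hammingNorm (c + Pi.single j 1 : Fin n → ZMod 2) + 1 = hammingNorm c := by
  have hj1 : c j = 1 := by revert h; generalize c j = a; revert a; decide
  have hset : (Finset.univ.filter fun k => (c + Pi.single j 1 : Fin n → ZMod 2) k ≠ 0)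
      = (Finset.univ.filter fun k => c k ≠ 0).erase j := by
    ext k
    rcases eq_or_ne k j with rfl | hk
    · simp only [Finset.mem_filter, Finset.mem_univ, true_and, Pi.add_apply,
        Pi.single_eq_same, hj1, Finset.mem_erase, ne_eq, not_true_eq_false, false_and,
        iff_false, not_not]
      decide
    · simp [Finset.mem_erase, hk, flip_apply_ne c j k hk]
  rw [supp_card, supp_card, hset]
  exact Finset.card_erase_add_one (Finset.mem_filter.2 ⟨Finset.mem_univ _, h⟩)

lemma flip_supp_not_mem (c : Fin n → ZMod 2) (j : Fin n) (h : c j = 0) :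
    hammingNorm (c + Pi.single j 1 : Fin n → ZMod 2) = hammingNorm c + 1 := by
  have hset : (Finset.univ.filter fun k => (c + Pi.single j 1 : Fin n → ZMod 2) k ≠ 0)
      = insert j (Finset.univ.filter fun k => c k ≠ 0) := by
    ext k
    rcases eq_or_ne k j with rfl | hk
    · simp [Pi.single_eq_same, h]
    · simp [Finset.mem_insert, hk, flip_apply_ne c j k hk]
  rw [supp_card, supp_card, hset,
    Finset.card_insert_of_notMem (by simp [h])]

lemma flip_inj (c : Fin n → ZMod 2) : Function.Injective (fun j : Fin n => (c + Pi.single j 1 : Fin n → ZMod 2)) := by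
  intro j k h
  have h2 : (Pi.single j 1 : Fin n → ZMod 2) = Pi.single k 1 := add_left_cancel h
  by_contra hne
  have := congrFun h2 j
  simp [Pi.single_eq_same, Pi.single_eq_of_ne hne] at this

lemma flip_syndrome (H : Matrix (Fin m) (Fin n) (ZMod 2)) (c : Fin n → ZMod 2) (j : Fin n) :
    H.mulVec (c + Pi.single j 1 : Fin n → ZMod 2) = H.mulVec c + col H j := by
  rw [Matrix.mulVec_add, Matrix.mulVec_single]
  funext i; simp [col]


lemma dist_card (x y : Fin n → ZMod 2) :
    hammingDist x y = (Finset.univ.filter fun k => x k ≠ y k).card := rfl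

lemma dist_flip (c : Fin n → ZMod 2) (j : Fin n) :
    hammingDist (c + Pi.single j 1 : Fin n → ZMod 2) c = 1 := by
  rw [dist_card]
  have : (Finset.univ.filter fun k => (c + Pi.single j 1 : Fin n → ZMod 2) k ≠ c k) = {j} := by
    ext k
    rcases eq_or_ne k j with rfl | hk
    · simp only [Finset.mem_filter, Finset.mem_univ, true_and, Pi.add_apply,
        Pi.single_eq_same, Finset.mem_singleton, iff_true]
      generalize c k = a; revert a; decide
    · simp [flip_apply_ne c j k hk, hk]
  rw [this, Finset.card_singleton]

section Decode

variable (H : Matrix (Fin m) (Fin n) (ZMod 2))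
variable (hsurj : ∀ s : Fin m → ZMod 2, s ≠ 0 → ∃ j, col H j = s)

/-- nearest-codeword decoding -/
noncomputable def decode (v : Fin n → ZMod 2) : Fin n → ZMod 2 :=
  if h : H.mulVec v = 0 then v else
    v + Pi.single (Classical.choose (hsurj (H.mulVec v) h)) 1

lemma decode_code (v : Fin n → ZMod 2) : H.mulVec (decode H hsurj v) = 0 := by
  rw [decode]
  split_ifs with h
  · exact h
  · rw [flip_syndrome, Classical.choose_spec (hsurj (H.mulVec v) h)]
    funext i
    simp only [Pi.add_apply, Pi.zero_apply]
    generalize H.mulVec v i = a; revert a; decide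

lemma decode_dist (v : Fin n → ZMod 2) : hammingDist v (decode H hsurj v) ≤ 1 := by
  rw [decode]
  split_ifs with h
  · simp
  · rw [hammingDist_comm]
    exact le_of_eq (dist_flip v _)

lemma decode_unique
    (hmin : ∀ c : Fin n → ZMod 2, H.mulVec c = 0 → c ≠ 0 → 3 ≤ hammingNorm c)
    (v c : Fin n → ZMod 2) (hc : H.mulVec c = 0)
    (hd : hammingDist v c ≤ 1) : decode H hsurj v = c := by
  by_contra hne
  have h1 : hammingDist (decode H hsurj v) c ≤ 2 := by
    calc hammingDist (decode H hsurj v) c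
        ≤ hammingDist (decode H hsurj v) v + hammingDist v c := hammingDist_triangle _ _ _
      _ ≤ 1 + 1 := by
          have := decode_dist H hsurj v
          rw [hammingDist_comm] at this
          omega
      _ = 2 := rfl
  have h2 : H.mulVec (decode H hsurj v - c) = 0 := by
    rw [Matrix.mulVec_sub, decode_code, hc, sub_zero]
  have h3 : decode H hsurj v - c ≠ 0 := sub_ne_zero.2 hne
  have h4 := hmin _ h2 h3
  rw [hammingDist_comm, hammingDist_eq_hammingNorm, neg_add_eq_sub] at h1
  omega

lemma mem_ball_iff (v c : Fin n → ZMod 2) :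
    hammingDist v c ≤ 1 ↔ v = c ∨ ∃ j, v = c + Pi.single j 1 := by
  constructor
  · intro h
    interval_cases hd : hammingDist v c
    · exact Or.inl (hammingDist_eq_zero.1 hd)
    · right
      rw [dist_card] at hd
      obtain ⟨j, hj⟩ := Finset.card_eq_one.1 hd
      refine ⟨j, funext fun k => ?_⟩
      rcases eq_or_ne k j with rfl | hk
      · have hkj : v k ≠ c k := by
          have : k ∈ ({k} : Finset (Fin n)) := Finset.mem_singleton_self k
          rw [← hj] at this
          exact (Finset.mem_filter.1 this).2
        simp only [Pi.add_apply, Pi.single_eq_same]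
        revert hkj; generalize v k = a; generalize c k = b; revert a b; decide
      · have hkj : ¬ (v k ≠ c k) := by
          intro hne
          have : k ∈ ({j} : Finset (Fin n)) := by
            rw [← hj]; exact Finset.mem_filter.2 ⟨Finset.mem_univ _, hne⟩
          exact hk (Finset.mem_singleton.1 this)
        push_neg at hkj
        rw [hkj, flip_apply_ne c j k hk]
  · rintro (rfl | ⟨j, rfl⟩)
    · simp
    · exact le_of_eq (dist_flip c j)


lemma jset_card (c : Fin n → ZMod 2) (i : ℕ) (hi : 1 ≤ i) :
    (Finset.univ.filter fun j : Fin n =>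
        hammingNorm (c + Pi.single j 1 : Fin n → ZMod 2) = i).card
      = (if hammingNorm c = i + 1 then i + 1 else 0)
        + (if hammingNorm c + 1 = i then n + 1 - i else 0) := by
  set w := hammingNorm c with hw
  have key : ∀ j : Fin n,
      hammingNorm (c + Pi.single j 1 : Fin n → ZMod 2) = i ↔
        ((c j ≠ 0 ∧ w = i + 1) ∨ (c j = 0 ∧ w + 1 = i)) := by
    intro j
    rcases eq_or_ne (c j) 0 with h0 | h0
    · rw [flip_supp_not_mem c j h0]
      simp [h0, hw]
    · have := flip_supp_mem c j h0
      constructor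
      · intro he; exact Or.inl ⟨h0, by omega⟩
      · rintro (⟨-, hwi⟩ | ⟨hc0, -⟩)
        · omega
        · exact absurd hc0 h0
  rcases eq_or_ne w (i + 1) with hcase | hcase
  · have hset : (Finset.univ.filter fun j : Fin n =>
        hammingNorm (c + Pi.single j 1 : Fin n → ZMod 2) = i)
          = Finset.univ.filter fun j => c j ≠ 0 := by
      apply Finset.filter_congr
      intro j _
      rw [key j]
      simp only [hcase]
      constructor
      · rintro (⟨h, -⟩ | ⟨-, h⟩)
        · exact h
        · omega
      · intro h; exact Or.inl ⟨h, trivial⟩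
    rw [hset, ← supp_card, ← hw, hcase, if_pos rfl, if_neg (by omega)]
  rcases eq_or_ne (w + 1) i with hcase2 | hcase2
  · have hset : (Finset.univ.filter fun j : Fin n =>
        hammingNorm (c + Pi.single j 1 : Fin n → ZMod 2) = i)
          = Finset.univ.filter fun j => c j = 0 := by
      apply Finset.filter_congr
      intro j _
      rw [key j]
      constructor
      · rintro (⟨-, h⟩ | ⟨h, -⟩)
        · omega
        · exact h
      · intro h; exact Or.inr ⟨h, hcase2⟩
    rw [hset, if_neg hcase, if_pos hcase2]
    have hsplit := Finset.card_filter_add_card_filter_not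
      (s := (Finset.univ : Finset (Fin n))) (p := fun j => c j = 0)
    simp only [Finset.card_univ, Fintype.card_fin] at hsplit
    have : (Finset.univ.filter fun j : Fin n => ¬ c j = 0).card = w := by
      rw [hw, supp_card]
    omega
  · have hset : (Finset.univ.filter fun j : Fin n =>
        hammingNorm (c + Pi.single j 1 : Fin n → ZMod 2) = i) = ∅ := by
      rw [Finset.filter_eq_empty_iff]
      intro j _
      rw [key j]
      rintro (⟨-, h⟩ | ⟨-, h⟩)
      · exact hcase h
      · exact hcase2 h
    rw [hset, if_neg hcase, if_neg hcase2, Finset.card_empty]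

lemma fiber_card
    (hmin : ∀ c : Fin n → ZMod 2, H.mulVec c = 0 → c ≠ 0 → 3 ≤ hammingNorm c)
    (i : ℕ) (hi : 1 ≤ i) (c : Fin n → ZMod 2) (hc : H.mulVec c = 0) :
    ((Finset.univ.filter fun v : Fin n → ZMod 2 => hammingNorm v = i).filter
        fun v => decode H hsurj v = c).card
      = (if hammingNorm c = i then 1 else 0)
        + ((if hammingNorm c = i + 1 then i + 1 else 0)
          + (if hammingNorm c + 1 = i then n + 1 - i else 0)) := by
  have hset : ((Finset.univ.filter fun v : Fin n → ZMod 2 => hammingNorm v = i).filter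
        fun v => decode H hsurj v = c)
      = (insert c ((Finset.univ : Finset (Fin n)).image
          fun j => (c + Pi.single j 1 : Fin n → ZMod 2))).filter
          fun v => hammingNorm v = i := by
    ext v
    simp only [Finset.mem_filter, Finset.mem_univ, true_and, Finset.mem_insert,
      Finset.mem_image]
    constructor
    · rintro ⟨hv, hd⟩
      have : hammingDist v c ≤ 1 := hd ▸ decode_dist H hsurj v
      rcases (mem_ball_iff v c).1 this with h | ⟨j, hj⟩
      · exact ⟨Or.inl h, hv⟩
      · exact ⟨Or.inr ⟨j, hj.symm⟩, hv⟩
    · rintro ⟨hv, hn⟩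
      refine ⟨hn, decode_unique H hsurj hmin v c hc ?_⟩
      apply (mem_ball_iff v c).2
      rcases hv with h | ⟨j, hj⟩
      · exact Or.inl h
      · exact Or.inr ⟨j, hj.symm⟩
  rw [hset]
  have hcnotmem : c ∉ (Finset.univ : Finset (Fin n)).image
      fun j => (c + Pi.single j 1 : Fin n → ZMod 2) := by
    rw [Finset.mem_image]
    rintro ⟨j, -, hj⟩
    have := congrFun hj j
    simp only [Pi.add_apply, Pi.single_eq_same] at this
    revert this; generalize c j = a; revert a; decide
  rw [Finset.filter_insert]
  have himg : (((Finset.univ : Finset (Fin n)).image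
      fun j => (c + Pi.single j 1 : Fin n → ZMod 2)).filter
        fun v => hammingNorm v = i).card
      = (if hammingNorm c = i + 1 then i + 1 else 0)
        + (if hammingNorm c + 1 = i then n + 1 - i else 0) := by
    rw [Finset.filter_image, Finset.card_image_of_injective _ (flip_inj c),
      jset_card c i hi]
  rcases eq_or_ne (hammingNorm c) i with hci | hci
  · rw [if_pos hci,
      Finset.card_insert_of_notMem (fun hmem => hcnotmem (Finset.filter_subset _ _ hmem)),
      himg, if_pos hci, if_neg (by omega), if_neg (by omega)]
  · rw [if_neg hci, himg, if_neg hci, zero_add]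

end Decode


lemma bwc_eq (H : Matrix (Fin m) (Fin n) (ZMod 2)) (h : ℕ) :
    binaryWeightCount H h
      = ((Finset.univ.filter fun c : Fin n → ZMod 2 => H.mulVec c = 0).filter
          fun c => hammingNorm c = h).card := by
  rw [binaryWeightCount, Nat.card_eq_fintype_card, Fintype.card_subtype, Finset.filter_filter]

lemma weight_card (i : ℕ) :
    (Finset.univ.filter fun v : Fin n → ZMod 2 => hammingNorm v = i).card = n.choose i := by
  have h2 : ∀ x y : ZMod 2, (x ≠ 0 ↔ y ≠ 0) → x = y := by decide
  rw [show n.choose i = ((Finset.univ : Finset (Fin n)).powersetCard i).card by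
    rw [Finset.card_powersetCard, Finset.card_univ, Fintype.card_fin]]
  apply Finset.card_bij (fun v _ => Finset.univ.filter fun k => v k ≠ 0)
  · intro v hv
    rw [Finset.mem_powersetCard]
    exact ⟨Finset.subset_univ _, by
      rw [← supp_card]; exact (Finset.mem_filter.1 hv).2⟩
  · intro a ha b hb hab
    funext k
    apply h2
    constructor
    · intro h
      have : k ∈ Finset.univ.filter fun k => a k ≠ 0 :=
        Finset.mem_filter.2 ⟨Finset.mem_univ _, h⟩
      rw [hab] at this
      exact (Finset.mem_filter.1 this).2
    · intro h
      have : k ∈ Finset.univ.filter fun k => b k ≠ 0 :=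
        Finset.mem_filter.2 ⟨Finset.mem_univ _, h⟩
      rw [← hab] at this
      exact (Finset.mem_filter.1 this).2
  · intro s hs
    refine ⟨fun k => if k ∈ s then (1 : ZMod 2) else 0, ?_, ?_⟩
    · rw [Finset.mem_filter]
      refine ⟨Finset.mem_univ _, ?_⟩
      rw [supp_card]
      have hset : (Finset.univ.filter fun k : Fin n =>
          (if k ∈ s then (1 : ZMod 2) else 0) ≠ 0) = s := by
        ext k
        by_cases hk : k ∈ s <;> simp [hk]
      rw [hset]
      exact (Finset.mem_powersetCard.1 hs).2
    · ext k
      by_cases hk : k ∈ s <;> simp [hk]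

end BHWaux

theorem binary_hamming_weight_distribution_recurrence
    (m : ℕ) (hm : 1 < m)
    (n : ℕ) (hn : n = 2 ^ m - 1)
    (H : Matrix (Fin m) (Fin n) (ZMod 2))
    (hnz : ∀ j : Fin n, (fun i => H i j) ≠ 0)
    (hinj : ∀ j k : Fin n, j ≠ k → (fun i => H i j) ≠ fun i => H i k)
    (C : ℕ → ℕ) (hC : ∀ h : ℕ, C h = binaryWeightCount H h) :
    C 0 = 1 ∧ C 1 = 0 ∧
      ∀ i : ℕ, 1 ≤ i →
        ((i : ℤ) + 1) * (C (i + 1) : ℤ) + (C i : ℤ)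
            + ((n : ℤ) - (i : ℤ) + 1) * (C (i - 1) : ℤ) =
          (n.choose i : ℤ) := by
  classical
  open BHWaux in
  have hsurj := col_surj H hm hn hnz hinj
  have hmin := min_weight H hnz hinj
  set B := Finset.univ.filter fun c : Fin n → ZMod 2 => H.mulVec c = 0 with hB
  have hCB : ∀ h, C h = (B.filter fun c => hammingNorm c = h).card :=
    fun h => (hC h).trans (bwc_eq H h)
  have hC0 : C 0 = 1 := by
    rw [hCB]
    have : B.filter (fun c => hammingNorm c = 0) = {0} := by
      ext c
      simp only [hB, Finset.filter_filter, Finset.mem_filter, Finset.mem_univ, true_and,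
        Finset.mem_singleton]
      constructor
      · rintro ⟨-, h0⟩; exact hammingNorm_eq_zero.1 h0
      · rintro rfl; exact ⟨Matrix.mulVec_zero H, hammingNorm_zero⟩
    rw [this, Finset.card_singleton]
  have hC1 : C 1 = 0 := by
    rw [hCB, Finset.card_eq_zero, Finset.filter_eq_empty_iff]
    rintro c hc h1
    have hc0 : H.mulVec c = 0 := (Finset.mem_filter.1 hc).2
    have hne : c ≠ 0 := fun h => by simp [h] at h1
    have := hmin c hc0 hne
    omega
  refine ⟨hC0, hC1, fun i hi => ?_⟩
  have hCle : ∀ h, n < h → C h = 0 := by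
    intro h hh
    rw [hCB, Finset.card_eq_zero, Finset.filter_eq_empty_iff]
    rintro c - hwc
    have := hammingNorm_le_card_fintype (x := c)
    rw [Fintype.card_fin] at this
    omega
  -- the ℕ identity
  have hfib := Finset.card_eq_sum_card_fiberwise
    (s := Finset.univ.filter fun v : Fin n → ZMod 2 => hammingNorm v = i) (t := B)
    (f := decode H hsurj)
    (fun v _ => Finset.mem_filter.2 ⟨Finset.mem_univ _, decode_code H hsurj v⟩)
  rw [weight_card] at hfib
  have hsum : ∀ c ∈ B,
      ((Finset.univ.filter fun v : Fin n → ZMod 2 => hammingNorm v = i).filter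
        fun v => decode H hsurj v = c).card
      = (if hammingNorm c = i then 1 else 0)
        + ((if hammingNorm c = i + 1 then i + 1 else 0)
          + (if hammingNorm c + 1 = i then n + 1 - i else 0)) := by
    intro c hc
    exact fiber_card H hsurj hmin i hi c (Finset.mem_filter.1 hc).2
  rw [Finset.sum_congr rfl hsum, Finset.sum_add_distrib, Finset.sum_add_distrib] at hfib
  have e1 : ∑ c ∈ B, (if hammingNorm c = i then 1 else 0) = C i := by
    rw [← Finset.sum_filter, Finset.sum_const, smul_eq_mul, mul_one, hCB]
  have e2 : ∑ c ∈ B, (if hammingNorm c = i + 1 then i + 1 else 0) = C (i + 1) * (i + 1) := by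
    rw [← Finset.sum_filter, Finset.sum_const, smul_eq_mul, hCB]
  have e3 : ∑ c ∈ B, (if hammingNorm c + 1 = i then n + 1 - i else 0)
      = C (i - 1) * (n + 1 - i) := by
    rw [← Finset.sum_filter, Finset.sum_const, smul_eq_mul, hCB]
    congr 2
    apply Finset.filter_congr
    intro c _
    constructor <;> intro h <;> omega
  rw [e1, e2, e3] at hfib
  -- pass to ℤ
  rcases le_or_gt i (n + 1) with hin | hin
  · have hcast : ((n + 1 - i : ℕ) : ℤ) = (n : ℤ) - i + 1 := by
      omega
    have := congrArg (Nat.cast : ℕ → ℤ) hfib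
    push_cast at this
    rw [hcast] at this
    linarith
  · have h1 : C (i - 1) = 0 := hCle _ (by omega)
    have h2 : C i = 0 := hCle _ (by omega)
    have h3 : C (i + 1) = 0 := hCle _ (by omega)
    have h4 : n.choose i = 0 := Nat.choose_eq_zero_of_lt (by omega)
    rw [h1, h2, h3, h4]
    simp
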